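/- Let n, d, r be positive integers with n ≤ r ≤ C(n+1,2). Let J ⊆ S be a homogeneous ideal with I_R ⊆ J and dim_ℂ (S/J)_u = h_{r,X}(u) for all u ∈ ℤ^d_{≥0}. If J is radical and B_X-saturated, then Σ(J) is a radical homogeneous ideal of V. -/

import Mathlib

/-!
Common setup, following the paper "On the abundance of minimal border rank symmetric
tensors verifying Comon's conjecture".

* `S = ℂ[α_{i,j} : 1 ≤ i ≤ d, 1 ≤ j ≤ n]` is modeled as `MvPolynomial (Fin d × Fin n) ℂ`,
  with the `ℤ^d`-grading in which `deg α_{i,j} = e_i`; `Scomp n d u` is the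
  multidegree-`u` component (`u : Fin d → ℕ`).
* `V = ℂ[β_1,…,β_n]` is modeled as `MvPolynomial (Fin n) ℂ` with its standard grading;
  `Vcomp n N` is the degree-`N` component.
* The graded duals `T` and `P` are modeled by the same polynomial rings, with `S`
  (resp. `V`) acting by differentiation (`apolar`); `ann F` is the apolar
  (annihilator) ideal of `F`.
* A tensor `F ∈ (ℂ^n)^{⊗d}` is an element of the multidegree-`(1,…,1)` component
  `Scomp n d (fun _ => 1)` (a multilinear form in the `x_{i,j}`).
-/

open MvPolynomial Submodule Module

noncomputable section

namespace BorderComon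

/-- the multidegree-`u` graded component of `S`. -/
def Scomp (n d : ℕ) (u : Fin d → ℕ) : Submodule ℂ (MvPolynomial (Fin d × Fin n) ℂ) :=
  weightedHomogeneousSubmodule ℂ (fun p : Fin d × Fin n => Pi.single p.1 1) u

/-- the degree-`N` graded component of `V`. -/
def Vcomp (n : ℕ) (N : ℕ) : Submodule ℂ (MvPolynomial (Fin n) ℂ) :=
  homogeneousSubmodule (Fin n) ℂ N

/-- the diagonal ring map `π : S → V`, `α_{i,j} ↦ β_j`. -/
def piAlg (n d : ℕ) : MvPolynomial (Fin d × Fin n) ℂ →ₐ[ℂ] MvPolynomial (Fin n) ℂ :=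
  aeval (fun p : Fin d × Fin n => X p.2)

/-- `π` as a `ℂ`-linear map. -/
def piL (n d : ℕ) : MvPolynomial (Fin d × Fin n) ℂ →ₗ[ℂ] MvPolynomial (Fin n) ℂ :=
  (piAlg n d).toLinearMap

/-- the ring map `ρ : S → V`, `α_{1,j} ↦ β_j` and `α_{i,j} ↦ 0` for `i ≥ 2`
(rows are `0`-indexed, so the first row is row `0`). -/
def rho (n d : ℕ) : MvPolynomial (Fin d × Fin n) ℂ →ₐ[ℂ] MvPolynomial (Fin n) ℂ :=
  aeval (fun p : Fin d × Fin n => if (p.1 : ℕ) = 0 then X p.2 else 0)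

/-- the result of differentiating `F` by the monomial `X^a`:
`∂^a X^b = (∏_i b_i!/(b_i-a_i)!) X^{b-a}` (and `= 0` unless `a ≤ b`, which is
automatic since the descending factorial vanishes there). -/
def diffMon {σ : Type*} (a : σ →₀ ℕ) (F : MvPolynomial σ ℂ) : MvPolynomial σ ℂ :=
  ∑ b ∈ F.support, (F.coeff b * ∏ i ∈ a.support, ((b i).descFactorial (a i) : ℂ)) •
    monomial (b - a) (1 : ℂ)

/-- the apolarity action: `apolar F ψ = ψ ∘ F` is the result of letting `ψ` act on `F`
by differentiation, linearly in `ψ`. -/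
def apolar {σ : Type*} (F : MvPolynomial σ ℂ) : MvPolynomial σ ℂ →ₗ[ℂ] MvPolynomial σ ℂ :=
  Finsupp.lsum ℂ (fun a : σ →₀ ℕ => LinearMap.toSpanSingleton ℂ _ (diffMon a F)) ∘ₗ
    (AddMonoidAlgebra.coeffLinearEquiv ℂ).toLinearMap

/-- the apolar (annihilator) ideal `Ann(F) = {ψ : ψ ∘ F = 0}`, as a subspace. -/
def ann {σ : Type*} (F : MvPolynomial σ ℂ) : Submodule ℂ (MvPolynomial σ ℂ) :=
  LinearMap.ker (apolar F)

/-- the ideal `I_R ⊆ S` generated by the `2×2` minors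
`α_{i,j} α_{k,ℓ} − α_{i,ℓ} α_{k,j}`, `i < k`, `j < ℓ`. -/
def IR (n d : ℕ) : Ideal (MvPolynomial (Fin d × Fin n) ℂ) :=
  Ideal.span {q | ∃ i k : Fin d, ∃ j l : Fin n, i < k ∧ j < l ∧
    q = X (i, j) * X (k, l) - X (i, l) * X (k, j)}

/-- `J ⊆ S` is a (multigraded) homogeneous ideal: it is the sum of its
multigraded components. -/
def IsHomogS (n d : ℕ) (J : Ideal (MvPolynomial (Fin d × Fin n) ℂ)) : Prop :=
  Submodule.restrictScalars ℂ J = ⨆ u : Fin d → ℕ, (Submodule.restrictScalars ℂ J ⊓ Scomp n d u)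

/-- `I ⊆ V` is a homogeneous ideal: it is the sum of its graded components. -/
def IsHomogV (n : ℕ) (I : Ideal (MvPolynomial (Fin n) ℂ)) : Prop :=
  Submodule.restrictScalars ℂ I = ⨆ N : ℕ, (Submodule.restrictScalars ℂ I ⊓ Vcomp n N)

/-- the exponent redistribution underlying `ψ_u`: in the sorted list
`i_1 ≤ ⋯ ≤ i_N` of the indices of the monomial `β^γ` (value `j` occurring `γ j`
times, `N = |γ|`), row `i` receives the block of positions
`[∑_{i'<i} u i', ∑_{i'≤i} u i')`, while value `j` occupies positions
`[∑_{j'<j} γ j', ∑_{j'≤j} γ j')`; hence the exponent of `α_{i,j}` is the size of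
the intersection of these two intervals. -/
def distrib (n d : ℕ) (u : Fin d → ℕ) (γ : Fin n →₀ ℕ) : (Fin d × Fin n) →₀ ℕ :=
  Finsupp.equivFunOnFinite.symm fun p : Fin d × Fin n =>
    min (∑ i ∈ Finset.univ.filter fun i : Fin d => (i : ℕ) ≤ (p.1 : ℕ), u i)
        (∑ j ∈ Finset.univ.filter fun j : Fin n => (j : ℕ) ≤ (p.2 : ℕ), γ j)
    - max (∑ i ∈ Finset.univ.filter fun i : Fin d => (i : ℕ) < (p.1 : ℕ), u i)
          (∑ j ∈ Finset.univ.filter fun j : Fin n => (j : ℕ) < (p.2 : ℕ), γ j)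

/-- the linear map `ψ_u : V → S` sending a monomial `β_{i_1} β_{i_2} ⋯ β_{i_N}`
with `i_1 ≤ i_2 ≤ ⋯ ≤ i_N` to
`(α_{1,i_1} ⋯ α_{1,i_{u_1}}) (α_{2,i_{u_1+1}} ⋯ α_{2,i_{u_1+u_2}}) ⋯`.
(Its restriction to `Vcomp n (∑ i, u i)` is the map `ψ_u : V_{|u|} → S_u` of the
paper.) -/
def psi (n d : ℕ) (u : Fin d → ℕ) :
    MvPolynomial (Fin n) ℂ →ₗ[ℂ] MvPolynomial (Fin d × Fin n) ℂ :=
  AddMonoidAlgebra.mapDomainLinearMap ℂ ℂ (distrib n d u)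

/-- `Υ(I) = I_R + ∑_{u} ψ_u(I_{|u|}) ⊆ S`. -/
def Upsilon (n d : ℕ) (I : Ideal (MvPolynomial (Fin n) ℂ)) :
    Submodule ℂ (MvPolynomial (Fin d × Fin n) ℂ) :=
  restrictScalars ℂ (IR n d) ⊔
    ⨆ u : Fin d → ℕ, Submodule.map (psi n d u) (restrictScalars ℂ I ⊓ Vcomp n (∑ i, u i))

/-- the irrelevant ideal `B_X = ∏_{i=1}^d (α_{i,1},…,α_{i,n}) ⊆ S`. -/
def BX (n d : ℕ) : Ideal (MvPolynomial (Fin d × Fin n) ℂ) :=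
  ∏ i : Fin d, Ideal.span (Set.range fun j : Fin n => X (i, j))

/-- the irrelevant ideal `B_Y = (β_1,…,β_n) ⊆ V`. -/
def BY (n : ℕ) : Ideal (MvPolynomial (Fin n) ℂ) :=
  Ideal.span (Set.range X)

/-- `Σ(J) = ⊕_{a ≥ 0} ⊕_{s ∈ ℰ} π(J_{a𝟏+s}) ⊆ V`, where
`ℰ = {0, e_1, e_1+e_2, …, e_1+⋯+e_{d-1}}` (the element `s` with `m` ones is
`fun i => if i < m then 1 else 0`). -/
def SigmaMap (n d : ℕ) (J : Ideal (MvPolynomial (Fin d × Fin n) ℂ)) :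
    Submodule ℂ (MvPolynomial (Fin n) ℂ) :=
  ⨆ a : ℕ, ⨆ m : Fin d, Submodule.map (piL n d)
    (restrictScalars ℂ J ⊓ Scomp n d (fun i => a + if (i : ℕ) < (m : ℕ) then 1 else 0))

/-- the set of tensors of rank at most `r`: sums of `r` decomposable tensors
`v_1 ⊗ ⋯ ⊗ v_d = ∏_i (∑_j v_i(j) x_{i,j})`. -/
def rankLE (n d r : ℕ) : Set (MvPolynomial (Fin d × Fin n) ℂ) :=
  {F | ∃ v : Fin r → Fin d → Fin n → ℂ,
    F = ∑ s : Fin r, ∏ i : Fin d, ∑ j : Fin n, C (v s i j) * X (i, j)}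

/-- `F` has border rank at most `r`: coefficientwise (finitely many coefficients are
involved), `F` lies in the closure of the set of tensors of rank at most `r`. -/
def brkLE (n d : ℕ) (F : MvPolynomial (Fin d × Fin n) ℂ) (r : ℕ) : Prop :=
  (fun m => coeff m F) ∈ closure ((fun G => fun m => coeff m G) '' rankLE n d r)

/-- the border rank of a tensor. -/
def brk (n d : ℕ) (F : MvPolynomial (Fin d × Fin n) ℂ) : ℕ :=
  sInf {r | brkLE n d F r}

/-- polynomials that are sums of `r` `d`-th powers of linear forms. -/
def srankLE (n d r : ℕ) : Set (MvPolynomial (Fin n) ℂ) :=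
  {p | ∃ c : Fin r → Fin n → ℂ, p = ∑ s : Fin r, (∑ j : Fin n, C (c s j) * X j) ^ d}

/-- `p` has symmetric border rank at most `r`. -/
def sbrkLE (n d : ℕ) (p : MvPolynomial (Fin n) ℂ) (r : ℕ) : Prop :=
  (fun m => coeff m p) ∈ closure ((fun q => fun m => coeff m q) '' srankLE n d r)

/-- the symmetric border rank of a degree-`d` form. -/
def sbrk (n d : ℕ) (p : MvPolynomial (Fin n) ℂ) : ℕ :=
  sInf {r | sbrkLE n d p r}

/-- `F` is a symmetric tensor: invariant under the permutations of the `d` factors. -/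
def IsSymm (n d : ℕ) (F : MvPolynomial (Fin d × Fin n) ℂ) : Prop :=
  ∀ τ : Equiv.Perm (Fin d), rename (Prod.map τ id) F = F

/-- the degree-`d` polynomial `p_F` corresponding to a symmetric tensor `F`, obtained
by identifying all the rows of variables (`x_{i,j} ↦ y_j`); `F` is the polarization
of `p_F`. -/
def pF (n d : ℕ) (F : MvPolynomial (Fin d × Fin n) ℂ) : MvPolynomial (Fin n) ℂ :=
  rename Prod.snd F

/-- `F` is concise: the contraction `(ℂ^n)^* → (ℂ^n)^{⊗(d-1)}` of the first tensor
factor, `w ↦ F(x_{1,j} := w_j)`, is injective. -/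
def Concise (n d : ℕ) (F : MvPolynomial (Fin d × Fin n) ℂ) : Prop :=
  Function.Injective fun w : Fin n → ℂ =>
    aeval (fun p : Fin d × Fin n => if (p.1 : ℕ) = 0 then C (w p.2) else X p) F

/-- the ideal `∑_{0<u<𝟏} S·Ann(F)_u` generated by the components `Ann(F)_u`,
`0 < u < 𝟏` (componentwise). -/
def midIdeal (n d : ℕ) (F : MvPolynomial (Fin d × Fin n) ℂ) :
    Ideal (MvPolynomial (Fin d × Fin n) ℂ) :=
  Ideal.span (⋃ u ∈ {u : Fin d → ℕ | 0 < u ∧ u < fun _ => 1},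
    ((ann F ⊓ Scomp n d u : Submodule ℂ (MvPolynomial (Fin d × Fin n) ℂ)) :
      Set (MvPolynomial (Fin d × Fin n) ℂ)))

/-- `F` is a *sharp* tensor:
(1) `Ann(F)` has exactly `n-1` minimal generators of multidegree `𝟏`;
(2) `dim (S/Ann F)_u = n` for all `0 < u < 𝟏`;
(3) `dim (S/(Ann(F)_{e_i+e_j}))_{s e_i + e_j} = n` for all `i ≠ j`, `1 ≤ s ≤ d-1`. -/
def Sharp (n d : ℕ) (F : MvPolynomial (Fin d × Fin n) ℂ) : Prop :=
  (finrank ℂ (ann F ⊓ Scomp n d fun _ => 1 :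
        Submodule ℂ (MvPolynomial (Fin d × Fin n) ℂ)) -
      finrank ℂ (restrictScalars ℂ (midIdeal n d F) ⊓ Scomp n d fun _ => 1 :
        Submodule ℂ (MvPolynomial (Fin d × Fin n) ℂ)) = n - 1) ∧
  (∀ u : Fin d → ℕ, 0 < u → u < (fun _ => 1) →
    finrank ℂ (Scomp n d u ⧸ Submodule.comap (Scomp n d u).subtype (ann F)) = n) ∧
  (∀ i j : Fin d, i ≠ j → ∀ s : ℕ, 1 ≤ s → s ≤ d - 1 →
    finrank ℂ (Scomp n d (Pi.single i s + Pi.single j 1) ⧸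
      Submodule.comap (Scomp n d (Pi.single i s + Pi.single j 1)).subtype
        (restrictScalars ℂ (Ideal.span
          ((ann F ⊓ Scomp n d (Pi.single i 1 + Pi.single j 1) :
            Submodule ℂ (MvPolynomial (Fin d × Fin n) ℂ)) :
            Set (MvPolynomial (Fin d × Fin n) ℂ))))) = n)

section Aux
set_option synthInstance.maxHeartbeats 1000000
set_option maxHeartbeats 1000000

variable {n d : ℕ}

def rowS (b : Fin d × Fin n →₀ ℕ) : Fin d → ℕ := fun i => ∑ j : Fin n, b (i, j)

def colF (b : Fin d × Fin n →₀ ℕ) : Fin n →₀ ℕ := Finsupp.mapDomain Prod.snd b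

def tot (u : Fin d → ℕ) : ℕ := ∑ i, u i

lemma weight_eq_rowS (b : Fin d × Fin n →₀ ℕ) :
    Finsupp.weight (fun p : Fin d × Fin n => Pi.single p.1 1) b = rowS b := by
  funext i
  rw [Finsupp.weight_apply, Finsupp.sum_fintype _ _ (by intro p; simp)]
  have : ((∑ p : Fin d × Fin n, b p • (Pi.single p.1 1 : Fin d → ℕ)) i)
      = ∑ p : Fin d × Fin n, b p * (if i = p.1 then 1 else 0) := by
    rw [Finset.sum_apply]
    refine Finset.sum_congr rfl fun p _ => ?_
    rw [Pi.smul_apply, Pi.single_apply, smul_eq_mul]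
  rw [this, Fintype.sum_prod_type]
  simp only [mul_ite, mul_one, mul_zero]
  rw [rowS]
  rw [Finset.sum_comm]
  simp [Finset.sum_ite_eq]

lemma mem_Scomp_iff {u : Fin d → ℕ} {f : MvPolynomial (Fin d × Fin n) ℂ} :
    f ∈ Scomp n d u ↔ ∀ b ∈ f.support, rowS b = u := by
  rw [Scomp, mem_weightedHomogeneousSubmodule]
  constructor
  · intro h b hb
    rw [← weight_eq_rowS]; exact h (mem_support_iff.mp hb)
  · intro h b hb
    rw [weight_eq_rowS]; exact h b (mem_support_iff.mpr hb)

lemma colF_apply (b : Fin d × Fin n →₀ ℕ) (j : Fin n) :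
    colF b j = ∑ i : Fin d, b (i, j) := by
  classical
  rw [colF, Finsupp.mapDomain, Finsupp.sum_apply,
    Finsupp.sum_fintype _ _ (by intro p; simp)]
  have : ∀ p : Fin d × Fin n, (Finsupp.single p.2 (b p)) j
      = if j = p.2 then b p else 0 := by
    intro p; rw [Finsupp.single_apply]; simp [eq_comm]
  simp only [this]
  rw [Fintype.sum_prod_type]
  refine Finset.sum_congr rfl fun i _ => ?_
  simp [Finset.sum_ite_eq]

lemma piAlg_eq_rename : piAlg n d = rename Prod.snd := by
  ext p; simp [piAlg]

lemma piL_monomial (b : Fin d × Fin n →₀ ℕ) (c : ℂ) :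
    piL n d (monomial b c) = monomial (colF b) c := by
  show piAlg n d (monomial b c) = _
  rw [piAlg_eq_rename, rename_monomial]; rfl

lemma piL_mem_Vcomp {u : Fin d → ℕ} {f : MvPolynomial (Fin d × Fin n) ℂ}
    (hf : f ∈ Scomp n d u) : piL n d f ∈ Vcomp n (tot u) := by
  rw [Vcomp, mem_homogeneousSubmodule]
  intro γ hγ
  have : piL n d f = rename Prod.snd f := by
    show piAlg n d f = _; rw [piAlg_eq_rename]
  rw [this] at hγ
  obtain ⟨b, hb, hb0⟩ := coeff_rename_ne_zero _ _ _ hγ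
  have hγb : γ = colF b := hb.symm
  have hrow : rowS b = u := mem_Scomp_iff.mp hf b (mem_support_iff.mpr hb0)
  rw [Finsupp.weight_apply, Finsupp.sum_fintype _ _ (by intro p; simp)]
  simp only [Pi.one_apply, smul_eq_mul, mul_one]
  rw [hγb]
  calc ∑ j : Fin n, colF b j = ∑ j : Fin n, ∑ i : Fin d, b (i, j) := by
        simp [colF_apply]
    _ = ∑ i : Fin d, ∑ j : Fin n, b (i, j) := Finset.sum_comm
    _ = tot u := by rw [tot]; exact Finset.sum_congr rfl fun i _ => congrFun hrow i




lemma tele_step (a b c1 c2 : ℕ) (hab : a ≤ b) (h12 : c1 ≤ c2) :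
    min b c2 - c1 = (min a c2 - c1) + (min b c2 - max a c1) := by omega

lemma tele (cu : ℕ → ℕ) (hmono : ∀ t, cu t ≤ cu (t + 1)) (h0 : cu 0 = 0)
    (c1 c2 : ℕ) (h12 : c1 ≤ c2) :
    ∀ D, ∑ t ∈ Finset.range D, (min (cu (t + 1)) c2 - max (cu t) c1)
      = min (cu D) c2 - c1 := by
  intro D; induction D with
  | zero => simp [h0]
  | succ D ih =>
      rw [Finset.sum_range_succ, ih, ← tele_step _ _ _ _ (hmono D) h12]

def cum {m : ℕ} (u : Fin m → ℕ) (t : ℕ) : ℕ :=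
  ∑ i ∈ Finset.univ.filter (fun i : Fin m => (i : ℕ) < t), u i

lemma cum_zero {m : ℕ} (u : Fin m → ℕ) : cum u 0 = 0 := by simp [cum]

lemma cum_le {m : ℕ} (u : Fin m → ℕ) {t t' : ℕ} (h : t ≤ t') : cum u t ≤ cum u t' := by
  apply Finset.sum_le_sum_of_subset
  intro x hx
  simp only [Finset.mem_filter] at *
  exact ⟨hx.1, lt_of_lt_of_le hx.2 h⟩

lemma cum_step {m : ℕ} (u : Fin m → ℕ) (t : ℕ) : cum u t ≤ cum u (t + 1) :=
  cum_le u (Nat.le_succ t)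

lemma cum_top {m : ℕ} (u : Fin m → ℕ) {t : ℕ} (h : m ≤ t) : cum u t = tot u := by
  rw [cum, tot]
  congr 1
  ext x
  simp only [Finset.mem_filter, Finset.mem_univ, true_and, iff_true]
  exact lt_of_lt_of_le x.2 h

lemma cum_succ_fin {m : ℕ} (u : Fin m → ℕ) (i : Fin m) :
    cum u ((i : ℕ) + 1) = cum u (i : ℕ) + u i := by
  rw [cum, cum]
  have h1 : Finset.univ.filter (fun x : Fin m => (x : ℕ) < (i : ℕ) + 1)
      = insert i (Finset.univ.filter (fun x : Fin m => (x : ℕ) < (i : ℕ))) := by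
    ext x
    simp only [Finset.mem_filter, Finset.mem_univ, true_and, Finset.mem_insert, Fin.ext_iff]
    omega
  rw [h1, Finset.sum_insert (by simp), add_comm]

lemma cum_le_eq {m : ℕ} (u : Fin m → ℕ) (t : Fin m) :
    ∑ i ∈ Finset.univ.filter (fun i : Fin m => (i : ℕ) ≤ (t : ℕ)), u i
      = cum u ((t : ℕ) + 1) := by
  rw [cum]
  apply Finset.sum_congr _ (fun _ _ => rfl)
  ext x
  simp [Nat.lt_succ_iff]

lemma distrib_apply (u : Fin d → ℕ) (γ : Fin n →₀ ℕ) (p : Fin d × Fin n) :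
    distrib n d u γ p = min (cum u ((p.1 : ℕ) + 1)) (cum (⇑γ) ((p.2 : ℕ) + 1))
      - max (cum u (p.1 : ℕ)) (cum (⇑γ) (p.2 : ℕ)) := by
  show (Finsupp.equivFunOnFinite.symm _) p = _
  simp only [Finsupp.coe_equivFunOnFinite_symm]
  rw [cum_le_eq u p.1, cum_le_eq (⇑γ) p.2]
  rfl

lemma rowS_distrib (u : Fin d → ℕ) (γ : Fin n →₀ ℕ) (h : ∑ j : Fin n, γ j = tot u) :
    rowS (distrib n d u γ) = u := by
  funext i
  rw [rowS]
  have : ∀ j : Fin n, distrib n d u γ (i, j)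
      = min (cum (⇑γ) ((j : ℕ) + 1)) (cum u ((i : ℕ) + 1))
        - max (cum (⇑γ) (j : ℕ)) (cum u (i : ℕ)) := by
    intro j; rw [distrib_apply, min_comm, max_comm]
  simp only [this]
  rw [Fin.sum_univ_eq_sum_range
    (fun t => min (cum (⇑γ) (t + 1)) (cum u ((i : ℕ) + 1))
      - max (cum (⇑γ) t) (cum u (i : ℕ)))]
  rw [tele (cum ⇑γ) (cum_step _) (cum_zero _) _ _ (cum_step u (i : ℕ)) n]
  have h2 : cum (⇑γ) n = tot u := by rw [cum_top (⇑γ) (le_refl n), tot]; rw [← h]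
  have h3 : cum u ((i : ℕ) + 1) ≤ tot u := by
    rw [← cum_top u (le_refl d)]; exact cum_le u i.2
  rw [h2, min_eq_right h3, cum_succ_fin]
  omega

lemma colF_distrib (u : Fin d → ℕ) (γ : Fin n →₀ ℕ) (h : ∑ j : Fin n, γ j = tot u) :
    colF (distrib n d u γ) = γ := by
  ext j
  rw [colF_apply]
  have : ∀ i : Fin d, distrib n d u γ (i, j)
      = min (cum u ((i : ℕ) + 1)) (cum (⇑γ) ((j : ℕ) + 1))
        - max (cum u (i : ℕ)) (cum (⇑γ) (j : ℕ)) := fun i => distrib_apply u γ (i, j)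
  simp only [this]
  rw [Fin.sum_univ_eq_sum_range
    (fun t => min (cum u (t + 1)) (cum (⇑γ) ((j : ℕ) + 1))
      - max (cum u t) (cum (⇑γ) (j : ℕ)))]
  rw [tele (cum u) (cum_step _) (cum_zero _) _ _ (cum_step (⇑γ) (j : ℕ)) d]
  have h2 : cum (⇑γ) ((j : ℕ) + 1) ≤ cum u d := by
    rw [cum_top u (le_refl d), ← h]
    have := cum_le (⇑γ) (j.2 : (j : ℕ) + 1 ≤ n)
    rw [cum_top (⇑γ) (le_refl n)] at this
    rw [tot] at *
    exact this
  rw [min_eq_right h2, cum_succ_fin]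
  omega

lemma psi_monomial (u : Fin d → ℕ) (γ : Fin n →₀ ℕ) (c : ℂ) :
    psi n d u (monomial γ c) = monomial (distrib n d u γ) c := by
  rw [← single_eq_monomial, ← single_eq_monomial]
  exact AddMonoidAlgebra.mapDomainLinearMap_single _ _ _

lemma mem_of_support {σ : Type*} (f : MvPolynomial σ ℂ) (P : Submodule ℂ (MvPolynomial σ ℂ))
    (h : ∀ b ∈ f.support, monomial b (coeff b f) ∈ P) : f ∈ P := by
  rw [← support_sum_monomial_coeff f]; exact P.sum_mem h

lemma monomial_mem_Scomp {u : Fin d → ℕ} {b : Fin d × Fin n →₀ ℕ} {c : ℂ}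
    (h : rowS b = u) : monomial b c ∈ Scomp n d u := by
  rw [mem_Scomp_iff]
  intro b' hb'
  rw [support_monomial] at hb'
  by_cases hc : c = 0
  · simp [hc] at hb'
  · rw [if_neg hc, Finset.mem_singleton] at hb'
    rw [hb']; exact h

lemma mem_Vcomp_iff {N : ℕ} {f : MvPolynomial (Fin n) ℂ} :
    f ∈ Vcomp n N ↔ ∀ γ ∈ f.support, ∑ j : Fin n, γ j = N := by
  rw [Vcomp, mem_homogeneousSubmodule]
  have hw : ∀ γ : Fin n →₀ ℕ, Finsupp.weight (1 : Fin n → ℕ) γ = ∑ j : Fin n, γ j := by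
    intro γ
    rw [Finsupp.weight_apply, Finsupp.sum_fintype _ _ (by intro p; simp)]
    simp
  constructor
  · intro h γ hγ; rw [← hw]; exact h (mem_support_iff.mp hγ)
  · intro h γ hγ; rw [hw]; exact h γ (mem_support_iff.mpr hγ)

lemma psi_mem_Scomp {u : Fin d → ℕ} {f : MvPolynomial (Fin n) ℂ}
    (hf : f ∈ Vcomp n (tot u)) : psi n d u f ∈ Scomp n d u := by
  have : psi n d u f = ∑ γ ∈ f.support, psi n d u (monomial γ (coeff γ f)) := by
    rw [← map_sum, support_sum_monomial_coeff]
  rw [this]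
  apply Submodule.sum_mem
  intro γ hγ
  rw [psi_monomial]
  exact monomial_mem_Scomp (rowS_distrib u γ (mem_Vcomp_iff.mp hf γ hγ))

lemma piL_psi {u : Fin d → ℕ} {f : MvPolynomial (Fin n) ℂ}
    (hf : f ∈ Vcomp n (tot u)) : piL n d (psi n d u f) = f := by
  conv_rhs => rw [← support_sum_monomial_coeff f]
  conv_lhs => rw [← support_sum_monomial_coeff f]
  rw [map_sum, map_sum]
  apply Finset.sum_congr rfl
  intro γ hγ
  rw [psi_monomial, piL_monomial, colF_distrib u γ (mem_Vcomp_iff.mp hf γ hγ)]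



lemma swap_mem_IR {i k : Fin d} (hik : i ≠ k) (j l : Fin n) :
    (X (i, j) * X (k, l) - X (i, l) * X (k, j) : MvPolynomial (Fin d × Fin n) ℂ)
      ∈ IR n d := by
  by_cases hjl : j = l
  · subst hjl; simp
  rcases lt_or_gt_of_ne hik with h | h <;> rcases lt_or_gt_of_ne hjl with h2 | h2
  · exact Ideal.subset_span ⟨i, k, j, l, h, h2, rfl⟩
  · have hg : (X (i, l) * X (k, j) - X (i, j) * X (k, l) : MvPolynomial (Fin d × Fin n) ℂ)
        ∈ IR n d := Ideal.subset_span ⟨i, k, l, j, h, h2, rfl⟩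
    have := (IR n d).neg_mem hg
    convert this using 1; ring
  · have hg : (X (k, j) * X (i, l) - X (k, l) * X (i, j) : MvPolynomial (Fin d × Fin n) ℂ)
        ∈ IR n d := Ideal.subset_span ⟨k, i, j, l, h, h2, rfl⟩
    have := (IR n d).neg_mem hg
    convert this using 1; ring
  · have hg : (X (k, l) * X (i, j) - X (k, j) * X (i, l) : MvPolynomial (Fin d × Fin n) ℂ)
        ∈ IR n d := Ideal.subset_span ⟨k, i, l, j, h, h2, rfl⟩
    convert hg using 1; ring

lemma rowS_add (x y : Fin d × Fin n →₀ ℕ) : rowS (x + y) = rowS x + rowS y := by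
  funext i
  simp [rowS, Finset.sum_add_distrib]

lemma rowS_single (p : Fin d × Fin n) (c : ℕ) :
    rowS (Finsupp.single p c) = Pi.single p.1 c := by
  obtain ⟨a, bb⟩ := p
  funext i
  simp only [rowS, Finsupp.single_apply, Prod.mk.injEq, ite_and, Pi.single_apply]
  by_cases h : a = i <;> simp [h, Finset.sum_ite_eq, eq_comm]

lemma colF_add (x y : Fin d × Fin n →₀ ℕ) : colF (x + y) = colF x + colF y :=
  Finsupp.mapDomain_add

lemma colF_single (p : Fin d × Fin n) (c : ℕ) :
    colF (Finsupp.single p c) = Finsupp.single p.2 c :=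
  Finsupp.mapDomain_single

lemma monomial_sub_mem_IR (D : ℕ) :
    ∀ (b b' : Fin d × Fin n →₀ ℕ),
    (∑ p : Fin d × Fin n, ((b p - b' p) + (b' p - b p))) = D →
    rowS b = rowS b' → colF b = colF b' →
    (monomial b 1 - monomial b' 1 : MvPolynomial (Fin d × Fin n) ℂ) ∈ IR n d := by
  induction D using Nat.strong_induction_on with
  | _ D IH =>
  intro b b' hD hrow hcol
  by_cases hbb : b = b'
  · rw [hbb]; simp
  have htot : ∑ p : Fin d × Fin n, b p = ∑ p : Fin d × Fin n, b' p := by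
    rw [Fintype.sum_prod_type, Fintype.sum_prod_type]
    exact Finset.sum_congr rfl fun i _ => congrFun hrow i
  -- find p with b' p < b p
  have hex : ∃ p, b' p < b p := by
    by_contra hex
    push_neg at hex
    apply hbb
    ext p
    by_contra hne
    have h1 : b p < b' p := lt_of_le_of_ne (hex p) hne
    have : ∑ p : Fin d × Fin n, b p < ∑ p : Fin d × Fin n, b' p :=
      Finset.sum_lt_sum (fun q _ => hex q) ⟨p, Finset.mem_univ p, h1⟩
    omega
  obtain ⟨⟨i, j⟩, hij⟩ := hex
  have hrowi : ∑ j' : Fin n, b (i, j') = ∑ j' : Fin n, b' (i, j') := congrFun hrow i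
  have hexl : ∃ l, b (i, l) < b' (i, l) := by
    by_contra h
    push_neg at h
    have : ∑ l : Fin n, b' (i, l) < ∑ l : Fin n, b (i, l) :=
      Finset.sum_lt_sum (fun q _ => h q) ⟨j, Finset.mem_univ j, hij⟩
    omega
  obtain ⟨l, hl⟩ := hexl
  have hcoll : ∑ i' : Fin d, b (i', l) = ∑ i' : Fin d, b' (i', l) := by
    have := DFunLike.congr_fun hcol l
    rw [colF_apply, colF_apply] at this
    exact this
  have hexk : ∃ k, b' (k, l) < b (k, l) := by
    by_contra h
    push_neg at h
    have : ∑ i' : Fin d, b (i', l) < ∑ i' : Fin d, b' (i', l) :=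
      Finset.sum_lt_sum (fun q _ => h q) ⟨i, Finset.mem_univ i, hl⟩
    omega
  obtain ⟨k, hkl⟩ := hexk
  have hik : i ≠ k := by rintro rfl; omega
  have hjl : j ≠ l := by rintro rfl; omega
  -- the four points are distinct
  have ne1 : ((i, j) : Fin d × Fin n) ≠ (i, l) := by simp [hjl]
  have ne2 : ((i, j) : Fin d × Fin n) ≠ (k, j) := by simp [hik]
  have ne3 : ((i, j) : Fin d × Fin n) ≠ (k, l) := by simp [hik]
  have ne4 : ((i, l) : Fin d × Fin n) ≠ (k, j) := by simp [hik]
  have ne5 : ((i, l) : Fin d × Fin n) ≠ (k, l) := by simp [hik]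
  have ne6 : ((k, j) : Fin d × Fin n) ≠ (k, l) := by simp [hjl]
  set c : Fin d × Fin n →₀ ℕ := b - Finsupp.single (i, j) 1 - Finsupp.single (k, l) 1 with hc
  have hbeq : b = c + (Finsupp.single (i, j) 1 + Finsupp.single (k, l) 1) := by
    ext p
    simp only [hc, Finsupp.add_apply, Finsupp.tsub_apply, Finsupp.single_apply]
    by_cases h1 : ((i, j) : Fin d × Fin n) = p <;> by_cases h2 : ((k, l) : Fin d × Fin n) = p
    · exact absurd (h1 ▸ h2) ne3.symm
    · subst h1; rw [if_pos rfl, if_neg h2]; omega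
    · subst h2; rw [if_neg h1, if_pos rfl]; omega
    · rw [if_neg h1, if_neg h2]; omega
  set b1 : Fin d × Fin n →₀ ℕ := c + (Finsupp.single (i, l) 1 + Finsupp.single (k, j) 1)
    with hb1
  -- step membership
  have hX : ∀ p : Fin d × Fin n,
      (X p : MvPolynomial (Fin d × Fin n) ℂ) = monomial (Finsupp.single p 1) 1 := fun p => rfl
  have hstep : (monomial b 1 - monomial b1 1 : MvPolynomial (Fin d × Fin n) ℂ)
      = monomial c 1 * (X (i, j) * X (k, l) - X (i, l) * X (k, j)) := by
    rw [mul_sub]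
    rw [hX, hX, hX, hX, monomial_mul, monomial_mul, monomial_mul, monomial_mul]
    rw [hb1]
    conv_lhs => rw [hbeq]
    norm_num
  have hstepmem : (monomial b 1 - monomial b1 1 : MvPolynomial (Fin d × Fin n) ℂ)
      ∈ IR n d := by
    rw [hstep]; exact Ideal.mul_mem_left _ _ (swap_mem_IR hik j l)
  have happly : ∀ p, b p = c p + ((if (i, j) = p then 1 else 0) + (if (k, l) = p then 1 else 0))
      := by
    intro p
    conv_lhs => rw [hbeq]
    simp [Finsupp.add_apply, Finsupp.single_apply]
  have happly1 : ∀ p, b1 p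
      = c p + ((if (i, l) = p then 1 else 0) + (if (k, j) = p then 1 else 0)) := by
    intro p
    rw [hb1]
    simp [Finsupp.add_apply, Finsupp.single_apply]
  have hb1b : ∀ p, p ≠ (i, j) → p ≠ (i, l) → p ≠ (k, j) → p ≠ (k, l) → b1 p = b p := by
    intro p p1 p2 p3 p4
    rw [happly p, happly1 p, if_neg (Ne.symm p1), if_neg (Ne.symm p2),
      if_neg (Ne.symm p3), if_neg (Ne.symm p4)]
  have hpt : ∀ p, b1 p + ((if (i, j) = p then 1 else 0) + (if (k, l) = p then 1 else 0))
      = b p + ((if (i, l) = p then 1 else 0) + (if (k, j) = p then 1 else 0)) := by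
    intro p; rw [happly p, happly1 p]; omega
  have hv1 : b1 (i, j) + 1 = b (i, j) := by
    have := hpt (i, j)
    rw [if_pos rfl, if_neg (Ne.symm ne3), if_neg (Ne.symm ne1), if_neg (Ne.symm ne2)] at this
    omega
  have hv2 : b1 (k, l) + 1 = b (k, l) := by
    have := hpt (k, l)
    rw [if_neg ne3, if_pos rfl, if_neg ne5, if_neg ne6] at this
    omega
  have hv3 : b1 (i, l) = b (i, l) + 1 := by
    have := hpt (i, l)
    rw [if_neg ne1, if_neg (Ne.symm ne5), if_pos rfl, if_neg (Ne.symm ne4)] at this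
    omega
  have hv4 : b1 (k, j) = b (k, j) + 1 := by
    have := hpt (k, j)
    rw [if_neg ne2, if_neg (Ne.symm ne6), if_neg ne4, if_pos rfl] at this
    omega
  set T : Finset (Fin d × Fin n) := {(i, j), (i, l), (k, j), (k, l)} with hT
  have hsplit : ∀ g : Fin d × Fin n → ℕ, ∑ p : Fin d × Fin n, g p
      = ∑ p ∈ Finset.univ \ T, g p + ∑ p ∈ T, g p :=
    fun g => (Finset.sum_sdiff (Finset.subset_univ T)).symm
  have hTsum : ∀ g : Fin d × Fin n → ℕ, ∑ p ∈ T, g p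
      = g (i, j) + (g (i, l) + (g (k, j) + g (k, l))) := by
    intro g
    rw [hT]
    rw [Finset.sum_insert (by simp [ne1, ne2, ne3]), Finset.sum_insert (by simp [ne4, ne5]),
      Finset.sum_insert (by simp [ne6]), Finset.sum_singleton]
  have hsame : ∑ p ∈ Finset.univ \ T, ((b1 p - b' p) + (b' p - b1 p))
      = ∑ p ∈ Finset.univ \ T, ((b p - b' p) + (b' p - b p)) := by
    apply Finset.sum_congr rfl
    intro p hp
    rw [hT] at hp
    simp only [Finset.mem_sdiff, Finset.mem_univ, true_and, Finset.mem_insert,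
      Finset.mem_singleton] at hp
    push_neg at hp
    rw [hb1b p hp.1 hp.2.1 hp.2.2.1 hp.2.2.2]
  set D1 := ∑ p : Fin d × Fin n, ((b1 p - b' p) + (b' p - b1 p)) with hD1
  have hlt : D1 < D := by
    rw [← hD, hD1, hsplit (fun p => (b1 p - b' p) + (b' p - b1 p)),
      hsplit (fun p => (b p - b' p) + (b' p - b p)), hsame,
      hTsum (fun p => (b1 p - b' p) + (b' p - b1 p)),
      hTsum (fun p => (b p - b' p) + (b' p - b p))]
    omega
  have hrow1 : rowS b1 = rowS b' := by
    rw [← hrow, hb1]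
    conv_rhs => rw [hbeq]
    rw [rowS_add, rowS_add, rowS_add, rowS_add,
      rowS_single, rowS_single, rowS_single, rowS_single]
  have hcol1 : colF b1 = colF b' := by
    rw [← hcol, hb1]
    conv_rhs => rw [hbeq]
    rw [colF_add, colF_add, colF_add, colF_add,
      colF_single, colF_single, colF_single, colF_single]
    exact congrArg _ (add_comm _ _)
  have hmem2 := IH D1 hlt b1 b' rfl hrow1 hcol1
  have hfin : (monomial b 1 - monomial b' 1 : MvPolynomial (Fin d × Fin n) ℂ)
      = (monomial b 1 - monomial b1 1) + (monomial b1 1 - monomial b' 1) := by ring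
  rw [hfin]
  exact (IR n d).add_mem hstepmem hmem2


lemma sub_psi_mem_IR {u : Fin d → ℕ} {f : MvPolynomial (Fin d × Fin n) ℂ}
    (hf : f ∈ Scomp n d u) : f - psi n d u (piL n d f) ∈ IR n d := by
  have hdec : f - psi n d u (piL n d f)
      = ∑ b ∈ f.support,
        (monomial b (coeff b f) - psi n d u (piL n d (monomial b (coeff b f)))) := by
    rw [Finset.sum_sub_distrib, ← map_sum, ← map_sum, support_sum_monomial_coeff]
  rw [hdec]
  apply Ideal.sum_mem
  intro b hb
  have hr : rowS b = u := mem_Scomp_iff.mp hf b hb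
  have hcolsum : ∑ j : Fin n, colF b j = tot u := by
    calc ∑ j : Fin n, colF b j = ∑ j : Fin n, ∑ i : Fin d, b (i, j) := by simp [colF_apply]
      _ = ∑ i : Fin d, ∑ j : Fin n, b (i, j) := Finset.sum_comm
      _ = tot u := by rw [tot]; exact Finset.sum_congr rfl fun i _ => congrFun hr i
  rw [piL_monomial, psi_monomial]
  have h1 : (monomial b (coeff b f) - monomial (distrib n d u (colF b)) (coeff b f)
      : MvPolynomial (Fin d × Fin n) ℂ)
      = C (coeff b f) * (monomial b 1 - monomial (distrib n d u (colF b)) 1) := by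
    rw [mul_sub, C_mul_monomial, C_mul_monomial, mul_one]
  rw [h1]
  apply Ideal.mul_mem_left
  apply monomial_sub_mem_IR (∑ p : Fin d × Fin n, ((b p - distrib n d u (colF b) p)
    + (distrib n d u (colF b) p - b p))) b (distrib n d u (colF b)) rfl
  · rw [rowS_distrib u (colF b) hcolsum, hr]
  · rw [colF_distrib u (colF b) hcolsum]

lemma mem_IR_of_pi_eq {u : Fin d → ℕ} {f g : MvPolynomial (Fin d × Fin n) ℂ}
    (hf : f ∈ Scomp n d u) (hg : g ∈ Scomp n d u)
    (h : piL n d f = piL n d g) : f - g ∈ IR n d := by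
  have h1 := sub_psi_mem_IR hf
  have h2 := sub_psi_mem_IR hg
  have : f - g = (f - psi n d u (piL n d f)) - (g - psi n d u (piL n d g)) := by
    rw [h]; ring
  rw [this]
  exact (IR n d).sub_mem h1 h2


lemma move (J : Ideal (MvPolynomial (Fin d × Fin n) ℂ)) (hIR : IR n d ≤ J)
    (hsat : ∀ f : MvPolynomial (Fin d × Fin n) ℂ,
      (∀ b ∈ BX n d, f * b ∈ J) → f ∈ J)
    {u u' : Fin d → ℕ} {k i : Fin d} (hki : k ≠ i)
    (huk : u' k + 1 = u k) (hui : u' i = u i + 1)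
    (huo : ∀ t, t ≠ k → t ≠ i → u' t = u t)
    {f : MvPolynomial (Fin d × Fin n) ℂ} (hfJ : f ∈ J) (hfu : f ∈ Scomp n d u) :
    ∃ g, g ∈ J ∧ g ∈ Scomp n d u' ∧ piL n d g = piL n d f := by
  classical
  have hch : ∀ b ∈ f.support, ∃ j : Fin n, 0 < b (k, j) := by
    intro b hb
    have hr : rowS b = u := mem_Scomp_iff.mp hfu b hb
    by_contra h
    push_neg at h
    have h0 : rowS b k = 0 := by
      rw [rowS]; exact Finset.sum_eq_zero fun j _ => Nat.le_zero.mp (h j)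
    have := congrFun hr k
    omega
  choose j0 hj0 using hch
  have hbres : ∀ (b : Fin d × Fin n →₀ ℕ) (hb : b ∈ f.support),
      b = (b - Finsupp.single (k, j0 b hb) 1) + Finsupp.single (k, j0 b hb) 1 := by
    intro b hb
    ext p
    simp only [Finsupp.add_apply, Finsupp.tsub_apply, Finsupp.single_apply]
    by_cases h1 : ((k, j0 b hb) : Fin d × Fin n) = p
    · simp only [if_pos h1]
      have := hj0 b hb
      rw [h1] at this
      omega
    · simp only [if_neg h1]; omega
  set g : MvPolynomial (Fin d × Fin n) ℂ := ∑ b ∈ f.support.attach,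
    monomial ((b.1 - Finsupp.single (k, j0 b.1 b.2) 1) + Finsupp.single (i, j0 b.1 b.2) 1)
      (coeff b.1 f) with hg
  have hrow' : ∀ (b : Fin d × Fin n →₀ ℕ) (hb : b ∈ f.support),
      rowS ((b - Finsupp.single (k, j0 b hb) 1) + Finsupp.single (i, j0 b hb) 1) = u' := by
    intro b hb
    have hr : rowS b = u := mem_Scomp_iff.mp hfu b hb
    have hr2 : rowS (b - Finsupp.single (k, j0 b hb) 1) + Pi.single k 1 = u := by
      rw [← hr]
      conv_rhs => rw [hbres b hb]
      rw [rowS_add, rowS_single]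
    funext t
    rw [rowS_add, rowS_single, Pi.add_apply]
    have h2 := congrFun hr2 t
    rw [Pi.add_apply] at h2
    rw [Pi.single_apply] at h2 ⊢
    by_cases h3 : t = k <;> by_cases h4 : t = i
    · exact absurd (h3.symm.trans h4) hki
    · rw [if_pos h3] at h2
      rw [if_neg h4, h3]
      rw [h3] at h2
      omega
    · rw [if_neg h3] at h2
      rw [if_pos h4, h4]
      rw [h4] at h2
      omega
    · rw [if_neg h3] at h2
      rw [if_neg h4, huo t h3 h4]
      omega
  have hcol' : ∀ (b : Fin d × Fin n →₀ ℕ) (hb : b ∈ f.support),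
      colF ((b - Finsupp.single (k, j0 b hb) 1) + Finsupp.single (i, j0 b hb) 1) = colF b := by
    intro b hb
    conv_rhs => rw [hbres b hb]
    rw [colF_add, colF_add, colF_single, colF_single]
  have hgS : g ∈ Scomp n d u' := by
    rw [hg]
    apply Submodule.sum_mem
    intro b _
    exact monomial_mem_Scomp (hrow' b.1 b.2)
  have hpig : piL n d g = piL n d f := by
    rw [hg]
    conv_rhs => rw [← support_sum_monomial_coeff f,
      ← Finset.sum_attach f.support (fun b => monomial b (coeff b f))]
    rw [map_sum, map_sum]
    apply Finset.sum_congr rfl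
    intro b _
    rw [piL_monomial, piL_monomial, hcol' b.1 b.2]
  have hkey : ∀ c : Fin n, g * X (k, c) ∈ J := by
    intro c
    have hGX : g * X (k, c) = ∑ b ∈ f.support.attach,
        monomial (((b.1 - Finsupp.single (k, j0 b.1 b.2) 1) + Finsupp.single (i, j0 b.1 b.2) 1)
          + Finsupp.single (k, c) 1) (coeff b.1 f) := by
      rw [hg, Finset.sum_mul]
      apply Finset.sum_congr rfl
      intro b _
      rw [show (X (k, c) : MvPolynomial (Fin d × Fin n) ℂ)
          = monomial (Finsupp.single (k, c) 1) 1 from rfl, monomial_mul, mul_one]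
    have hXF : X (i, c) * f = ∑ b ∈ f.support.attach,
        monomial (b.1 + Finsupp.single (i, c) 1) (coeff b.1 f) := by
      conv_lhs => rw [← support_sum_monomial_coeff f,
        ← Finset.sum_attach f.support (fun b => monomial b (coeff b f))]
      rw [Finset.mul_sum]
      apply Finset.sum_congr rfl
      intro b _
      rw [show (X (i, c) : MvPolynomial (Fin d × Fin n) ℂ)
          = monomial (Finsupp.single (i, c) 1) 1 from rfl, monomial_mul, one_mul, add_comm]
    have hdiffIR : g * X (k, c) - X (i, c) * f ∈ IR n d := by
      rw [hGX, hXF, ← Finset.sum_sub_distrib]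
      apply Ideal.sum_mem
      intro b _
      set cf := coeff b.1 f with hcf
      set j1 := j0 b.1 b.2 with hj1
      set B := b.1 - Finsupp.single (k, j1) 1 with hB
      have hb' : b.1 = B + Finsupp.single (k, j1) 1 := hbres b.1 b.2
      rw [hb']
      have hXik : (X (i, j1) * X (k, c) : MvPolynomial (Fin d × Fin n) ℂ)
          = monomial (Finsupp.single (i, j1) 1 + Finsupp.single (k, c) 1) 1 := by
        rw [show (X (i, j1) : MvPolynomial (Fin d × Fin n) ℂ)
            = monomial (Finsupp.single (i, j1) 1) 1 from rfl,
          show (X (k, c) : MvPolynomial (Fin d × Fin n) ℂ)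
            = monomial (Finsupp.single (k, c) 1) 1 from rfl, monomial_mul, mul_one]
      have hXic : (X (i, c) * X (k, j1) : MvPolynomial (Fin d × Fin n) ℂ)
          = monomial (Finsupp.single (i, c) 1 + Finsupp.single (k, j1) 1) 1 := by
        rw [show (X (i, c) : MvPolynomial (Fin d × Fin n) ℂ)
            = monomial (Finsupp.single (i, c) 1) 1 from rfl,
          show (X (k, j1) : MvPolynomial (Fin d × Fin n) ℂ)
            = monomial (Finsupp.single (k, j1) 1) 1 from rfl, monomial_mul, mul_one]
      have hexp : C cf * (monomial B 1 * (X (i, j1) * X (k, c) - X (i, c) * X (k, j1)))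
          = monomial ((B + Finsupp.single (i, j1) 1) + Finsupp.single (k, c) 1) cf
            - monomial ((B + Finsupp.single (k, j1) 1) + Finsupp.single (i, c) 1) cf := by
        rw [hXik, hXic, mul_sub, mul_sub, monomial_mul, monomial_mul, C_mul_monomial,
          C_mul_monomial, ← add_assoc, ← add_assoc]
        norm_num
        rw [add_right_comm]
      rw [← hexp]
      exact Ideal.mul_mem_left _ _ (Ideal.mul_mem_left _ _
        (swap_mem_IR (fun h => hki h.symm) j1 c))
    have h2 : X (i, c) * f ∈ J := J.mul_mem_left _ hfJ
    have h3 := J.add_mem (hIR hdiffIR) h2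
    simpa using h3
  have hspan : ∀ x ∈ Ideal.span (Set.range fun c : Fin n => X (k, c)), g * x ∈ J := by
    intro x hx
    induction hx using Submodule.span_induction with
    | mem y hy =>
        obtain ⟨c, rfl⟩ := hy
        exact hkey c
    | zero => simpa using J.zero_mem
    | add y z _ _ hy hz => rw [mul_add]; exact J.add_mem hy hz
    | smul a y _ hy =>
        rw [smul_eq_mul, ← mul_assoc, mul_comm g a, mul_assoc]
        exact J.mul_mem_left a hy
  refine ⟨g, hsat g ?_, hgS, hpig⟩
  intro B hB
  apply hspan
  have hle : BX n d ≤ Ideal.span (Set.range fun c : Fin n => X (k, c)) := by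
    rw [BX]
    calc ∏ t : Fin d, Ideal.span (Set.range fun j : Fin n => X (t, j))
        = Ideal.span (Set.range fun j : Fin n => X (k, j)) *
          ∏ t ∈ Finset.univ.erase k, Ideal.span (Set.range fun j : Fin n => X (t, j)) :=
          (Finset.mul_prod_erase _ _ (Finset.mem_univ k)).symm
      _ ≤ _ := Ideal.mul_le_left
  exact hle hB


lemma sum_two {m : ℕ} (F : Fin m → ℕ) {k i : Fin m} (hki : k ≠ i) :
    ∑ t, F t = ∑ t ∈ Finset.univ \ {k, i}, F t + (F k + F i) := by
  rw [← Finset.sum_sdiff (Finset.subset_univ {k, i})]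
  congr 1
  rw [Finset.sum_insert (by simp [hki]), Finset.sum_singleton]

lemma move_chain (J : Ideal (MvPolynomial (Fin d × Fin n) ℂ)) (hIR : IR n d ≤ J)
    (hsat : ∀ f : MvPolynomial (Fin d × Fin n) ℂ,
      (∀ b ∈ BX n d, f * b ∈ J) → f ∈ J) (u : Fin d → ℕ) :
    ∀ (Dm : ℕ) (w : Fin d → ℕ) (f : MvPolynomial (Fin d × Fin n) ℂ),
      (∑ t, (w t - u t)) = Dm → tot w = tot u → f ∈ J → f ∈ Scomp n d w →
      ∃ g, g ∈ J ∧ g ∈ Scomp n d u ∧ piL n d g = piL n d f := by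
  intro Dm
  induction Dm using Nat.strong_induction_on with
  | _ Dm IH =>
  intro w f hD htot hfJ hfw
  by_cases hwu : w = u
  · exact ⟨f, hfJ, hwu ▸ hfw, rfl⟩
  · have hex : ∃ k, u k < w k := by
      by_contra h
      push_neg at h
      apply hwu
      funext t
      refine le_antisymm (h t) ?_
      by_contra h2
      push_neg at h2
      have : ∑ t, w t < ∑ t, u t :=
        Finset.sum_lt_sum (fun q _ => h q) ⟨t, Finset.mem_univ t, h2⟩
      rw [tot, tot] at htot
      omega
    obtain ⟨k, hk⟩ := hex
    have hexi : ∃ i, w i < u i := by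
      by_contra h
      push_neg at h
      have : ∑ t, u t < ∑ t, w t :=
        Finset.sum_lt_sum (fun q _ => h q) ⟨k, Finset.mem_univ k, hk⟩
      rw [tot, tot] at htot
      omega
    obtain ⟨i, hi⟩ := hexi
    have hki : k ≠ i := by rintro rfl; omega
    set w' : Fin d → ℕ := fun t => if t = k then w t - 1 else if t = i then w t + 1 else w t
      with hw'
    have hw'k : w' k + 1 = w k := by simp only [hw', if_pos rfl]; omega
    have hw'i : w' i = w i + 1 := by simp only [hw']; rw [if_neg (Ne.symm hki)]; simp
    have hw'o : ∀ t, t ≠ k → t ≠ i → w' t = w t := by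
      intro t h1 h2; simp only [hw', if_neg h1, if_neg h2]
    obtain ⟨g1, hg1J, hg1S, hg1pi⟩ := move J hIR hsat hki hw'k hw'i hw'o hfJ hfw
    have htot' : tot w' = tot u := by
      rw [← htot, tot, tot, sum_two w' hki, sum_two w hki]
      have : ∑ t ∈ Finset.univ \ {k, i}, w' t = ∑ t ∈ Finset.univ \ {k, i}, w t := by
        apply Finset.sum_congr rfl
        intro t ht
        simp only [Finset.mem_sdiff, Finset.mem_insert, Finset.mem_singleton] at ht
        push_neg at ht
        exact hw'o t ht.2.1 ht.2.2
      omega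
    have hD' : (∑ t, (w' t - u t)) + 1 = Dm := by
      rw [← hD, sum_two (fun t => w' t - u t) hki, sum_two (fun t => w t - u t) hki]
      have : ∑ t ∈ Finset.univ \ {k, i}, (w' t - u t)
          = ∑ t ∈ Finset.univ \ {k, i}, (w t - u t) := by
        apply Finset.sum_congr rfl
        intro t ht
        simp only [Finset.mem_sdiff, Finset.mem_insert, Finset.mem_singleton] at ht
        push_neg at ht
        rw [hw'o t ht.2.1 ht.2.2]
      omega
    obtain ⟨g, hgJ, hgS, hgpi⟩ := IH (∑ t, (w' t - u t)) (by omega) w' g1 rfl htot' hg1J hg1S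
    exact ⟨g, hgJ, hgS, hgpi.trans hg1pi⟩



lemma tot_aite (a m : ℕ) (hm : m ≤ d) :
    tot (fun i : Fin d => a + if (i : ℕ) < m then 1 else 0) = d * a + m := by
  rw [tot, Finset.sum_add_distrib, Finset.sum_const, Finset.card_univ, Fintype.card_fin,
    smul_eq_mul]
  congr 1
  have hfil : (Finset.range d).filter (fun t => t < m) = Finset.range m := by
    ext x; simp only [Finset.mem_filter, Finset.mem_range]; omega
  rw [Fin.sum_univ_eq_sum_range (fun t => if t < m then 1 else 0) d, Finset.sum_boole, hfil,
    Finset.card_range]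
  simp

def udeg (d N : ℕ) : Fin d → ℕ := fun i => N / d + if (i : ℕ) < N % d then 1 else 0

lemma tot_udeg (hd : 0 < d) (N : ℕ) : tot (udeg d N) = N := by
  have h : tot (udeg d N) = d * (N / d) + N % d :=
    tot_aite (N / d) (N % d) (le_of_lt (Nat.mod_lt _ hd))
  rw [h]
  exact Nat.div_add_mod N d

lemma piece_le_sigma (J : Ideal (MvPolynomial (Fin d × Fin n) ℂ)) (a : ℕ) (m : Fin d) :
    Submodule.map (piL n d) (restrictScalars ℂ J ⊓ Scomp n d
      (fun i => a + if (i : ℕ) < (m : ℕ) then 1 else 0)) ≤ SigmaMap n d J := by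
  rw [SigmaMap]
  calc Submodule.map (piL n d) (restrictScalars ℂ J ⊓ Scomp n d
        (fun i => a + if (i : ℕ) < (m : ℕ) then 1 else 0))
      ≤ ⨆ m' : Fin d, Submodule.map (piL n d) (restrictScalars ℂ J ⊓ Scomp n d
        (fun i => a + if (i : ℕ) < (m' : ℕ) then 1 else 0)) :=
        le_iSup (fun m' : Fin d => Submodule.map (piL n d) (restrictScalars ℂ J ⊓ Scomp n d
          (fun i => a + if (i : ℕ) < (m' : ℕ) then 1 else 0))) m
    _ ≤ _ := le_iSup (fun a' : ℕ => ⨆ m' : Fin d, Submodule.map (piL n d)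
        (restrictScalars ℂ J ⊓ Scomp n d
          (fun i => a' + if (i : ℕ) < (m' : ℕ) then 1 else 0))) a

lemma piAlg_X (p : Fin d × Fin n) : piAlg n d (X p) = X p.2 := aeval_X _ _

lemma sigma_mulX (hd : 0 < d) (J : Ideal (MvPolynomial (Fin d × Fin n) ℂ)) (j : Fin n) :
    ∀ x ∈ SigmaMap n d J, X j * x ∈ SigmaMap n d J := by
  intro x hx
  refine Submodule.iSup_induction _ (motive := fun y => X j * y ∈ SigmaMap n d J) hx ?_ (by simp)
    (fun y z hy hz => by
      show X j * (y + z) ∈ SigmaMap n d J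
      rw [mul_add]; exact add_mem hy hz)
  intro a y hy
  refine Submodule.iSup_induction _ (motive := fun y => X j * y ∈ SigmaMap n d J) hy ?_ (by simp)
    (fun y z hy hz => by
      show X j * (y + z) ∈ SigmaMap n d J
      rw [mul_add]; exact add_mem hy hz)
  intro m y hy
  obtain ⟨f, hf, rfl⟩ := Submodule.mem_map.mp hy
  have hmul : X ((m, j) : Fin d × Fin n) * f ∈ Scomp n d
      ((Pi.single m 1 : Fin d → ℕ) + fun i : Fin d => a + if (i : ℕ) < (m : ℕ) then 1 else 0) :=
    (isWeightedHomogeneous_X ℂ _ ((m, j) : Fin d × Fin n)).mul hf.2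
  have hXjf : X j * piL n d f = piL n d (X ((m, j) : Fin d × Fin n) * f) := by
    show _ = piAlg n d (X (m, j) * f)
    rw [map_mul, piAlg_X]
    rfl
  have hJm : X ((m, j) : Fin d × Fin n) * f ∈ J := J.mul_mem_left _ hf.1
  rw [hXjf]
  by_cases hm1 : (m : ℕ) + 1 < d
  · have hueq : ((Pi.single m 1 : Fin d → ℕ)
          + fun i : Fin d => a + if (i : ℕ) < (m : ℕ) then 1 else 0)
        = fun i : Fin d => a + if (i : ℕ) < ((⟨(m : ℕ) + 1, hm1⟩ : Fin d) : ℕ) then 1 else 0 := by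
      funext t
      rw [Pi.add_apply, Pi.single_apply]
      show (if t = m then 1 else 0) + (a + if (t : ℕ) < (m : ℕ) then 1 else 0)
        = a + if (t : ℕ) < (m : ℕ) + 1 then 1 else 0
      by_cases h1 : t = m
      · rw [if_pos h1, h1, if_neg (by omega : ¬(m : ℕ) < (m : ℕ)),
          if_pos (by omega : (m : ℕ) < (m : ℕ) + 1)]
        omega
      · have h2 : (t : ℕ) ≠ (m : ℕ) := fun hc => h1 (Fin.ext hc)
        rw [if_neg h1]
        by_cases h3 : (t : ℕ) < (m : ℕ)
        · rw [if_pos h3, if_pos (by omega)]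
          omega
        · rw [if_neg h3, if_neg (by omega)]
          omega
    rw [hueq] at hmul
    exact piece_le_sigma J a ⟨(m : ℕ) + 1, hm1⟩ (Submodule.mem_map.mpr ⟨_, ⟨hJm, hmul⟩, rfl⟩)
  · have hmd : (m : ℕ) + 1 = d := by have := m.2; omega
    have hueq : ((Pi.single m 1 : Fin d → ℕ)
          + fun i : Fin d => a + if (i : ℕ) < (m : ℕ) then 1 else 0)
        = fun i : Fin d => (a + 1) + if (i : ℕ) < ((⟨0, hd⟩ : Fin d) : ℕ) then 1 else 0 := by
      funext t
      rw [Pi.add_apply, Pi.single_apply]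
      show (if t = m then 1 else 0) + (a + if (t : ℕ) < (m : ℕ) then 1 else 0)
        = (a + 1) + if (t : ℕ) < 0 then 1 else 0
      rw [if_neg (by omega : ¬(t : ℕ) < 0)]
      by_cases h1 : t = m
      · rw [if_pos h1, h1, if_neg (by omega : ¬(m : ℕ) < (m : ℕ))]
        omega
      · have h2 : (t : ℕ) ≠ (m : ℕ) := fun hc => h1 (Fin.ext hc)
        have h3 : (t : ℕ) < (m : ℕ) := by have := t.2; omega
        rw [if_neg h1, if_pos h3]
        omega
    rw [hueq] at hmul
    exact piece_le_sigma J (a + 1) ⟨0, hd⟩ (Submodule.mem_map.mpr ⟨_, ⟨hJm, hmul⟩, rfl⟩)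

lemma sigma_mul (hd : 0 < d) (J : Ideal (MvPolynomial (Fin d × Fin n) ℂ)) :
    ∀ v x : MvPolynomial (Fin n) ℂ, x ∈ SigmaMap n d J → v * x ∈ SigmaMap n d J := by
  intro v
  induction v using MvPolynomial.induction_on with
  | C a =>
      intro x hx
      rw [← smul_eq_C_mul]
      exact Submodule.smul_mem _ a hx
  | add p q hp hq =>
      intro x hx
      rw [add_mul]
      exact add_mem (hp x hx) (hq x hx)
  | mul_X p j hp =>
      intro x hx
      rw [mul_assoc]
      exact hp _ (sigma_mulX hd J j x hx)

lemma sigma_graded (hd : 0 < d) (J : Ideal (MvPolynomial (Fin d × Fin n) ℂ)) :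
    SigmaMap n d J = ⨆ N : ℕ, SigmaMap n d J ⊓ Vcomp n N := by
  apply le_antisymm
  · conv_lhs => rw [SigmaMap]
    refine iSup_le fun a => iSup_le fun m => ?_
    refine le_trans ?_ (le_iSup _ (d * a + (m : ℕ)))
    refine le_inf (piece_le_sigma J a m) ?_
    rintro x ⟨f, hf, rfl⟩
    have := piL_mem_Vcomp hf.2
    rwa [tot_aite a (m : ℕ) (le_of_lt m.2)] at this
  · exact iSup_le fun N => inf_le_left

lemma sigma_hc (hd : 0 < d) (J : Ideal (MvPolynomial (Fin d × Fin n) ℂ)) (M : ℕ) :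
    ∀ x ∈ SigmaMap n d J, (homogeneousComponent M x) ∈
      Submodule.map (piL n d) (restrictScalars ℂ J ⊓ Scomp n d (udeg d M)) := by
  intro x hx
  refine Submodule.iSup_induction _
    (motive := fun y => homogeneousComponent M y ∈
      Submodule.map (piL n d) (restrictScalars ℂ J ⊓ Scomp n d (udeg d M))) hx ?_ (by simp)
    (fun y z hy hz => by
      show homogeneousComponent M (y + z) ∈ _
      rw [map_add]; exact add_mem hy hz)
  intro a y hy
  refine Submodule.iSup_induction _
    (motive := fun y => homogeneousComponent M y ∈
      Submodule.map (piL n d) (restrictScalars ℂ J ⊓ Scomp n d (udeg d M))) hy ?_ (by simp)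
    (fun y z hy hz => by
      show homogeneousComponent M (y + z) ∈ _
      rw [map_add]; exact add_mem hy hz)
  intro m y hy
  obtain ⟨f, hf, rfl⟩ := Submodule.mem_map.mp hy
  have hdeg : piL n d f ∈ homogeneousSubmodule (Fin n) ℂ (d * a + (m : ℕ)) := by
    have := piL_mem_Vcomp hf.2
    rwa [tot_aite a (m : ℕ) (le_of_lt m.2)] at this
  rw [homogeneousComponent_of_mem hdeg]
  split_ifs with hMe
  · have hueq : udeg d M = fun i : Fin d => a + if (i : ℕ) < (m : ℕ) then 1 else 0 := by
      subst hMe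
      funext i
      rw [udeg, Nat.mul_add_div hd, Nat.div_eq_of_lt m.2, Nat.mul_add_mod,
        Nat.mod_eq_of_lt m.2, add_zero]
    rw [hueq]
    exact Submodule.mem_map.mpr ⟨f, hf, rfl⟩
  · exact Submodule.zero_mem _

lemma sigma_comp (hd : 0 < d) (J : Ideal (MvPolynomial (Fin d × Fin n) ℂ)) {M : ℕ}
    {x : MvPolynomial (Fin n) ℂ} (hx : x ∈ SigmaMap n d J) (hxM : x ∈ Vcomp n M) :
    x ∈ Submodule.map (piL n d) (restrictScalars ℂ J ⊓ Scomp n d (udeg d M)) := by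
  have h := sigma_hc hd J M x hx
  rwa [homogeneousComponent_of_mem hxM, if_pos rfl] at h

lemma Scomp_pow {u : Fin d → ℕ} {f : MvPolynomial (Fin d × Fin n) ℂ}
    (hf : f ∈ Scomp n d u) (k : ℕ) : f ^ k ∈ Scomp n d (fun i => k * u i) := by
  induction k with
  | zero =>
      rw [pow_zero]
      have h1 := isWeightedHomogeneous_one ℂ (fun p : Fin d × Fin n => (Pi.single p.1 1 : Fin d → ℕ))
      have h2 : (fun i : Fin d => 0 * u i) = (0 : Fin d → ℕ) := by funext i; simp
      rw [Scomp, h2]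
      exact h1
  | succ k ih =>
      rw [pow_succ]
      have hmul : IsWeightedHomogeneous (fun p : Fin d × Fin n => Pi.single p.1 1)
          (f ^ k * f) ((fun i : Fin d => k * u i) + u) :=
        IsWeightedHomogeneous.mul ih hf
      have heq : ((fun i : Fin d => k * u i) + u) = fun i : Fin d => (k + 1) * u i := by
        funext i
        simp only [Pi.add_apply]
        ring
      rw [Scomp, ← heq]
      exact hmul

lemma sigma_radical_homog (hd : 0 < d)
    (J : Ideal (MvPolynomial (Fin d × Fin n) ℂ)) (hIR : IR n d ≤ J) (hrad : J.IsRadical)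
    (hsat : ∀ f : MvPolynomial (Fin d × Fin n) ℂ,
      (∀ b ∈ BX n d, f * b ∈ J) → f ∈ J)
    {N k : ℕ} (hk : k ≠ 0) {f : MvPolynomial (Fin n) ℂ} (hf : f ∈ Vcomp n N)
    (hfk : f ^ k ∈ SigmaMap n d J) : f ∈ SigmaMap n d J := by
  have hfkV : f ^ k ∈ Vcomp n (N * k) :=
    ((mem_homogeneousSubmodule _ _).mp hf).pow k
  obtain ⟨h, hh, hpih⟩ := Submodule.mem_map.mp (sigma_comp hd J hfk hfkV)
  have hfV' : f ∈ Vcomp n (tot (udeg d N)) := by rwa [tot_udeg hd]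
  have hgS : psi n d (udeg d N) f ∈ Scomp n d (udeg d N) := psi_mem_Scomp hfV'
  have hpig : piL n d (psi n d (udeg d N) f) = f := piL_psi hfV'
  have hgkS : (psi n d (udeg d N) f) ^ k ∈ Scomp n d (fun i => k * udeg d N i) :=
    Scomp_pow hgS k
  have htotk : tot (fun i => k * udeg d N i) = tot (udeg d (N * k)) := by
    rw [tot_udeg hd, tot, ← Finset.mul_sum, ← tot, tot_udeg hd]
    ring
  obtain ⟨h', hh'J, hh'S, hpih'⟩ := move_chain J hIR hsat (fun i => k * udeg d N i)
    (∑ t, (udeg d (N * k) t - k * udeg d N t)) (udeg d (N * k)) h rfl htotk.symm hh.1 hh.2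
  have hpowpi : piL n d ((psi n d (udeg d N) f) ^ k) = f ^ k := by
    show piAlg n d ((psi n d (udeg d N) f) ^ k) = f ^ k
    rw [map_pow]
    exact congrArg (· ^ k) hpig
  have hdiff : (psi n d (udeg d N) f) ^ k - h' ∈ IR n d :=
    mem_IR_of_pi_eq hgkS hh'S (by rw [hpowpi, hpih', hpih])
  have hgkJ : (psi n d (udeg d N) f) ^ k ∈ J := by
    have h2 := J.add_mem (hIR hdiff) hh'J
    simpa using h2
  have hgJ : psi n d (udeg d N) f ∈ J := hrad ⟨k, hgkJ⟩
  exact piece_le_sigma J (N / d) ⟨N % d, Nat.mod_lt N hd⟩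
    (Submodule.mem_map.mpr ⟨psi n d (udeg d N) f, ⟨hgJ, hgS⟩, hpig⟩)

end Aux

/-- Proposition 4.10: if `J ⊆ S` is a homogeneous ideal containing
`I_R` with Hilbert function `h_{r,X}` which is radical and `B_X`-saturated, then
`Σ(J)` is a radical homogeneous ideal of `V`. -/
theorem stmt_10 (n d r : ℕ) (hn : 0 < n) (hd : 0 < d)
    (hnr : n ≤ r) (hr : r ≤ (n + 1).choose 2)
    (J : Ideal (MvPolynomial (Fin d × Fin n) ℂ)) (hhom : IsHomogS n d J)
    (hIR : IR n d ≤ J)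
    (hHF : ∀ u : Fin d → ℕ, finrank ℂ (Scomp n d u ⧸
      Submodule.comap (Scomp n d u).subtype (restrictScalars ℂ J)) =
        min r (finrank ℂ (Scomp n d u)))
    (hrad : J.IsRadical)
    (hsat : ∀ f : MvPolynomial (Fin d × Fin n) ℂ,
      (∀ b ∈ BX n d, f * b ∈ J) → f ∈ J) :
    (∀ v x : MvPolynomial (Fin n) ℂ,
        x ∈ SigmaMap n d J → v * x ∈ SigmaMap n d J) ∧
      (SigmaMap n d J = ⨆ N : ℕ, SigmaMap n d J ⊓ Vcomp n N) ∧
      (∀ (f : MvPolynomial (Fin n) ℂ) (k : ℕ), k ≠ 0 →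
        f ^ k ∈ SigmaMap n d J → f ∈ SigmaMap n d J) := by
  classical
  refine ⟨sigma_mul hd J, sigma_graded hd J, ?_⟩
  intro f k hk hfk
  letI : GradedAlgebra (homogeneousSubmodule (Fin n) ℂ) := MvPolynomial.gradedAlgebra
  set I : Ideal (MvPolynomial (Fin n) ℂ) :=
    { carrier := SigmaMap n d J
      add_mem' := fun h1 h2 => add_mem h1 h2
      zero_mem' := zero_mem _
      smul_mem' := fun c x hx => by
        simpa [smul_eq_mul] using sigma_mul hd J c x hx } with hI
  have hdecompose : ∀ (y : MvPolynomial (Fin n) ℂ) (i : ℕ),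
      (DirectSum.decompose (homogeneousSubmodule (Fin n) ℂ) y i : MvPolynomial (Fin n) ℂ)
        = homogeneousComponent i y := fun y i =>
    MvPolynomial.weightedDecomposition.decompose'_apply ℂ _ y i
  have hIhom : I.IsHomogeneous (homogeneousSubmodule (Fin n) ℂ) := by
    intro i x hx
    rw [hdecompose]
    exact piece_le_sigma J (i / d) ⟨i % d, Nat.mod_lt i hd⟩ (sigma_hc hd J i x hx)
  have hfrad : f ∈ I.radical := ⟨k, hfk⟩
  have hradhom : (I.radical).IsHomogeneous (homogeneousSubmodule (Fin n) ℂ) := hIhom.radical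
  rw [← sum_homogeneousComponent f]
  apply Submodule.sum_mem
  intro i _
  have hci : homogeneousComponent i f ∈ I.radical := by
    have h2 := hradhom i hfrad
    rwa [hdecompose] at h2
  obtain ⟨k', hk'⟩ := hci
  by_cases hk0 : k' = 0
  · subst hk0
    rw [pow_zero] at hk'
    have h3 := sigma_mul hd J (homogeneousComponent i f) 1 hk'
    rwa [mul_one] at h3
  · exact sigma_radical_homog hd J hIR hrad hsat hk0
      ((mem_homogeneousSubmodule _ _).mpr (homogeneousComponent_isHomogeneous i f)) hk'

end BorderComon
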